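/- For any two density matrices ρ₁, ρ₂, the fidelity is bounded above by the super-fidelity: (tr√(√ρ₁ ρ₂ √ρ₁))² ≤ tr(ρ₁ρ₂) + √((1 - tr ρ₁²)(1 - tr ρ₂²)). -/

import Mathlib

open Matrix ComplexOrder

attribute [local instance] Classical.propDecidable

/-- The PSD square root `Matrix.PosSemidef.sqrt`, as defined in the older Mathlib (removed since). -/
noncomputable def Matrix.PosSemidef.sqrt {n : Type*} [Fintype n] [DecidableEq n] {𝕜 : Type*} [RCLike 𝕜]
    {A : Matrix n n 𝕜} (hA : A.PosSemidef) : Matrix n n 𝕜 :=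
  (hA.1.eigenvectorUnitary : Matrix n n 𝕜) * diagonal (((↑) : ℝ → 𝕜) ∘ (√·) ∘ hA.1.eigenvalues) *
    (star hA.1.eigenvectorUnitary : Matrix n n 𝕜)

/-- Fidelity `F(ρ₁,ρ₂) = (tr √(√ρ₁ ρ₂ √ρ₁))²` (0 when not defined). -/
noncomputable def fid {n : Type*} [Fintype n] [DecidableEq n] (ρ₁ ρ₂ : Matrix n n ℂ) : ℝ :=
  if h1 : ρ₁.PosSemidef then
    if h2 : (h1.sqrt * ρ₂ * h1.sqrt).PosSemidef then (h2.sqrt.trace).re ^ 2 else 0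
  else 0

section SqrtPort
open scoped MatrixOrder
namespace Matrix.PosSemidef
variable {n : Type*} [Fintype n] [DecidableEq n] {𝕜 : Type*} [RCLike 𝕜]

lemma sqrt_eq_cfcSqrt {A : Matrix n n 𝕜} (hA : A.PosSemidef) : hA.sqrt = CFC.sqrt A := by
  rw [CFC.sqrt_eq_cfc, cfc_nnreal_eq_real _ A, hA.1.cfc_eq]
  simp only [IsHermitian.cfc, Matrix.PosSemidef.sqrt]
  congr 3
  funext i
  simp [Real.coe_sqrt, Real.coe_toNNReal', max_eq_left (hA.eigenvalues_nonneg i)]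

lemma posSemidef_sqrt {A : Matrix n n 𝕜} (hA : A.PosSemidef) : hA.sqrt.PosSemidef := by
  rw [sqrt_eq_cfcSqrt]; exact nonneg_iff_posSemidef.mp (CFC.sqrt_nonneg A)

lemma sqrt_mul_self {A : Matrix n n 𝕜} (hA : A.PosSemidef) : hA.sqrt * hA.sqrt = A := by
  rw [sqrt_eq_cfcSqrt]; exact CFC.sqrt_mul_sqrt_self A (nonneg_iff_posSemidef.mpr hA)

lemma eq_sqrt_of_sq_eq {A : Matrix n n 𝕜} (hA : A.PosSemidef) {B : Matrix n n 𝕜}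
    (hB : B.PosSemidef) (hAB : A ^ 2 = B) : A = hB.sqrt := by
  rw [sqrt_eq_cfcSqrt]
  exact (CFC.sqrt_unique (by rw [← hAB, pow_two]) (nonneg_iff_posSemidef.mpr hA)).symm

end Matrix.PosSemidef
end SqrtPort

set_option linter.unusedSectionVars false
set_option maxHeartbeats 1000000

section Helpers

variable {n : Type*} [Fintype n] [DecidableEq n]


lemma diag_nonneg' {n : Type*} [Fintype n] [DecidableEq n] {A : Matrix n n ℂ} (hA : A.PosSemidef) (i : n) :
    (0:ℂ) ≤ A i i := by
  exact hA.diag_nonneg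

lemma trace_re_nonneg' {n : Type*} [Fintype n] [DecidableEq n] {A : Matrix n n ℂ} (hA : A.PosSemidef) :
    0 ≤ A.trace.re := by
  rw [Matrix.trace, Complex.re_sum]
  exact Finset.sum_nonneg fun i _ => ((Complex.le_def.mp (diag_nonneg' hA i)).1)

variable {n : Type*} [Fintype n] [DecidableEq n]

lemma conj_mul_self_re (z : ℂ) : ((starRingEnd ℂ) z * z).re = ‖z‖^2 := by
  simp [Complex.mul_re, Complex.sq_norm, Complex.normSq_apply]

lemma col_norm_sq (x : Matrix n n ℂ) (i : n) : ((xᴴ * x) i i).re = ∑ k, ‖x k i‖^2 := by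
  rw [Matrix.mul_apply, Complex.re_sum]
  exact Finset.sum_congr rfl fun k _ => by rw [conjTranspose_apply]; exact conj_mul_self_re _

lemma proj_trace_le {Q W : Matrix n n ℂ} (hQ : Q.PosSemidef)
    (hE2 : (W * Wᴴ) * (W * Wᴴ) = W * Wᴴ) : ((Wᴴ * Q * W).trace).re ≤ Q.trace.re := by
  set E := W * Wᴴ with hEdef
  have hRQ : hQ.sqrt.PosSemidef := hQ.posSemidef_sqrt
  have hEH : Eᴴ = E := by rw [hEdef, conjTranspose_mul, conjTranspose_conjTranspose]
  have hIE : (1 - E).PosSemidef := by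
    have ha : (1 - E)ᴴ = 1 - E := by rw [conjTranspose_sub, hEH, conjTranspose_one]
    have hb : (1 - E) * (1 - E) = 1 - E := by
      have h' : (1 - E) * (1 - E) = 1 - E - E + E * E := by noncomm_ring
      rw [h', hE2]; abel
    have := Matrix.posSemidef_conjTranspose_mul_self (1 - E)
    rwa [ha, hb] at this
  have hX : (hQ.sqrt * (1 - E) * hQ.sqrt).PosSemidef := by
    have := hIE.mul_mul_conjTranspose_same hQ.sqrt
    rwa [hRQ.1] at this
  have h0 : 0 ≤ ((hQ.sqrt * (1 - E) * hQ.sqrt).trace).re := trace_re_nonneg' hX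
  have htreq : (hQ.sqrt * (1 - E) * hQ.sqrt).trace = Q.trace - (Wᴴ * Q * W).trace := by
    rw [Matrix.trace_mul_cycle hQ.sqrt (1 - E) hQ.sqrt]
    calc (hQ.sqrt * hQ.sqrt * (1 - E)).trace = (Q * (1 - E)).trace := by
          rw [hQ.sqrt_mul_self]
      _ = Q.trace - (Q * E).trace := by rw [mul_sub, mul_one, trace_sub]
      _ = Q.trace - (Wᴴ * Q * W).trace := by
          rw [hEdef, Matrix.trace_mul_comm Q (W * Wᴴ), Matrix.trace_mul_cycle Wᴴ Q W]
  rw [htreq] at h0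
  simp only [Complex.sub_re] at h0
  linarith [h0]

lemma trace_sqrt_le {P Q : Matrix n n ℂ} (hP : P.PosSemidef) (hQ : Q.PosSemidef)
    (hD : (hP.sqrt * Q * hP.sqrt).PosSemidef) :
    (hD.sqrt.trace).re ≤ Real.sqrt (P.trace.re * Q.trace.re) := by
  set R := hP.sqrt with hRdef
  have hR : R.PosSemidef := hP.posSemidef_sqrt
  have hRQ : hQ.sqrt.PosSemidef := hQ.posSemidef_sqrt
  set D := R * Q * R with hDdef
  have hH : D.IsHermitian := hD.1
  set U : Matrix n n ℂ := (hH.eigenvectorUnitary : Matrix n n ℂ) with hUdef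
  have hUU : star U * U = 1 := by
    exact (Matrix.mem_unitaryGroup_iff').mp hH.eigenvectorUnitary.2
  have hUU' : U * star U = 1 := by
    exact (Matrix.mem_unitaryGroup_iff).mp hH.eigenvectorUnitary.2
  set d : n → ℝ := hH.eigenvalues with hddef
  have hd : ∀ i, 0 ≤ d i := fun i => hD.eigenvalues_nonneg i
  set σ : n → ℝ := fun i => Real.sqrt (d i) with hσdef
  have hσsq : ∀ i, σ i ^ 2 = d i := fun i => Real.sq_sqrt (hd i)
  have hspec : D = U * diagonal (fun i => (d i : ℂ)) * star U := by
    have := hH.spectral_theorem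
    rw [Unitary.conjStarAlgAut_apply] at this
    exact this
  have hdiagD : star U * D * U = diagonal (fun i => (d i : ℂ)) := by
    have := hH.conjStarAlgAut_star_eigenvectorUnitary
    simp only [Unitary.conjStarAlgAut_apply, Unitary.coe_star, star_star] at this
    exact this
  -- T is the square root of D
  set T := U * diagonal (fun i => (σ i : ℂ)) * star U with hTdef
  have hTpsd : T.PosSemidef := by
    have hdg : (diagonal (fun i => (σ i : ℂ))).PosSemidef := by
      refine Matrix.posSemidef_diagonal_iff.mpr fun i => ?_
      simp only [Complex.le_def, Complex.zero_re, Complex.zero_im, Complex.ofReal_re,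
        Complex.ofReal_im]
      exact ⟨Real.sqrt_nonneg _, trivial⟩
    simpa [Matrix.star_eq_conjTranspose, hTdef] using hdg.mul_mul_conjTranspose_same U
  have hT2 : T ^ 2 = D := by
    rw [pow_two, hTdef]
    calc U * diagonal (fun i => (σ i : ℂ)) * star U * (U * diagonal (fun i => (σ i : ℂ)) * star U)
        = U * (diagonal (fun i => (σ i : ℂ)) * (star U * U) * diagonal (fun i => (σ i : ℂ))) * star U := by
          simp only [Matrix.mul_assoc]
      _ = U * diagonal (fun i => (d i : ℂ)) * star U := by
          rw [hUU, mul_one, diagonal_mul_diagonal,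
            show (fun i => (σ i:ℂ) * (σ i:ℂ)) = (fun i => (d i : ℂ)) from
              funext fun i => by rw [← hσsq i]; push_cast; ring]
      _ = D := hspec.symm
  have hTsqrt : hD.sqrt = T := (hTpsd.eq_sqrt_of_sq_eq hD hT2).symm
  have htrT : (hD.sqrt.trace).re = ∑ i, σ i := by
    rw [hTsqrt, hTdef, Matrix.trace_mul_cycle, hUU, one_mul, trace_diagonal]
    rw [Complex.re_sum]
    simp
  -- the matrix c with orthogonal columns
  set c := hQ.sqrt * (R * U) with hcdef
  have e1 : cᴴ = star U * R * hQ.sqrt := by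
    rw [hcdef, conjTranspose_mul, conjTranspose_mul, hRQ.1, hR.1,
      ← Matrix.star_eq_conjTranspose, Matrix.mul_assoc]
  have hc : cᴴ * c = diagonal (fun i => (d i : ℂ)) := by
    calc cᴴ * c = star U * (R * (hQ.sqrt * (hQ.sqrt * (R * U)))) := by
          rw [e1, hcdef]; simp only [Matrix.mul_assoc]
      _ = star U * (R * (Q * (R * U))) := by
          rw [← Matrix.mul_assoc hQ.sqrt hQ.sqrt, hQ.sqrt_mul_self]
      _ = star U * D * U := by rw [hDdef]; simp only [Matrix.mul_assoc]
      _ = diagonal (fun i => (d i : ℂ)) := hdiagD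
  set e : n → ℂ := fun i => if d i = 0 then (0:ℂ) else (σ i : ℂ)⁻¹ with hedef
  set χ : n → ℂ := fun i => if d i = 0 then (0:ℂ) else 1 with hχdef
  set W := c * diagonal e with hWdef
  have hσne : ∀ i, d i ≠ 0 → (σ i : ℂ) ≠ 0 := by
    intro i hi
    have : 0 < σ i := Real.sqrt_pos.mpr (lt_of_le_of_ne (hd i) (Ne.symm hi))
    exact_mod_cast this.ne'
  have hdσ : ∀ i, (d i : ℂ) = (σ i : ℂ) * (σ i : ℂ) := by
    intro i; rw [← hσsq i]; push_cast; ring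
  have hWW : Wᴴ * W = diagonal χ := by
    rw [hWdef, conjTranspose_mul, diagonal_conjTranspose, Matrix.mul_assoc,
      ← Matrix.mul_assoc cᴴ c, hc, diagonal_mul_diagonal, diagonal_mul_diagonal]
    ext i j
    rcases eq_or_ne i j with rfl | hij
    · simp only [diagonal_apply_eq]
      by_cases hi : d i = 0
      · simp [hedef, hχdef, hi]
      · have hne := hσne i hi
        simp only [hedef, hχdef, if_neg hi, Pi.star_apply, star_inv₀, Complex.star_def,
          Complex.conj_ofReal, hdσ i]
        field_simp
    · simp [diagonal_apply_ne _ hij]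
  have hWχ : W * diagonal χ = W := by
    have hfun : (fun i => e i * χ i) = e := by
      funext i; by_cases hi : d i = 0 <;> simp [hedef, hχdef, hi]
    rw [hWdef, Matrix.mul_assoc, diagonal_mul_diagonal, hfun]
  -- the key diagonal identity
  have hxyd : (R * U)ᴴ * (hQ.sqrt * W) =
      diagonal (fun i => if d i = 0 then (0:ℂ) else (σ i : ℂ)) := by
    have step : (R * U)ᴴ * (hQ.sqrt * W) = cᴴ * c * diagonal e := by
      rw [hWdef, conjTranspose_mul, hR.1, ← Matrix.star_eq_conjTranspose, e1, hcdef]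
      simp only [Matrix.mul_assoc]
    rw [step, hc, diagonal_mul_diagonal]
    ext i j
    rcases eq_or_ne i j with rfl | hij
    · simp only [diagonal_apply_eq]
      by_cases hi : d i = 0
      · simp [hedef, hi]
      · have hne := hσne i hi
        simp only [hedef, if_neg hi]
        rw [hdσ i]
        field_simp
    · simp [diagonal_apply_ne _ hij]
  have hRR : R * R = P := hP.sqrt_mul_self
  clear_value W e χ c T σ d U
  set x := R * U with hxdef
  set y := hQ.sqrt * W with hydef
  set α : n → ℝ := fun i => Real.sqrt (∑ k, ‖x k i‖^2) with hαdef
  set β : n → ℝ := fun i => Real.sqrt (∑ k, ‖y k i‖^2) with hβdef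
  have hαnn : ∀ i, 0 ≤ α i := fun i => Real.sqrt_nonneg _
  have hβnn : ∀ i, 0 ≤ β i := fun i => Real.sqrt_nonneg _
  have hsum : (hD.sqrt.trace).re = ∑ i, ((xᴴ * y) i i).re := by
    rw [htrT]
    refine Finset.sum_congr rfl fun i _ => ?_
    rw [hxyd, diagonal_apply_eq]
    by_cases hi : d i = 0
    · rw [if_pos hi, hσdef]
      simp [hi]
    · rw [if_neg hi]
      simp
  have entry_le : ∀ i, ((xᴴ * y) i i).re ≤ α i * β i := by
    intro i
    have h1 : ((xᴴ * y) i i).re ≤ ∑ k, ‖x k i‖ * ‖y k i‖ := by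
      have ha : ((xᴴ * y) i i).re ≤ ‖(xᴴ * y) i i‖ := by
        exact Complex.re_le_norm _
      have hb : ‖(xᴴ * y) i i‖ ≤ ∑ k, ‖xᴴ i k * y k i‖ := by
        rw [Matrix.mul_apply]; exact norm_sum_le _ _
      refine le_trans ha (le_trans hb (le_of_eq (Finset.sum_congr rfl fun k _ => ?_)))
      rw [conjTranspose_apply, norm_mul, norm_star]
    refine le_trans h1 ?_
    have hnn : 0 ≤ ∑ k, ‖x k i‖ * ‖y k i‖ :=
      Finset.sum_nonneg fun k _ => mul_nonneg (norm_nonneg _) (norm_nonneg _)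
    have hcs := Finset.sum_mul_sq_le_sq_mul_sq Finset.univ (fun k => ‖x k i‖) (fun k => ‖y k i‖)
    calc ∑ k, ‖x k i‖ * ‖y k i‖ = Real.sqrt ((∑ k, ‖x k i‖ * ‖y k i‖)^2) :=
          (Real.sqrt_sq hnn).symm
      _ ≤ Real.sqrt ((∑ k, ‖x k i‖^2) * (∑ k, ‖y k i‖^2)) := Real.sqrt_le_sqrt hcs
      _ = α i * β i := Real.sqrt_mul (Finset.sum_nonneg fun k _ => sq_nonneg _) (∑ k, ‖y k i‖^2)
  have hα2 : ∑ i, (α i)^2 = P.trace.re := by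
    have h1 : ∀ i, (α i)^2 = ((xᴴ * x) i i).re := fun i => by
      rw [col_norm_sq, hαdef]
      exact Real.sq_sqrt (Finset.sum_nonneg fun k _ => sq_nonneg _)
    rw [Finset.sum_congr rfl fun i _ => h1 i]
    have hxx : xᴴ * x = star U * P * U := by
      rw [hxdef, conjTranspose_mul, hR.1, ← Matrix.star_eq_conjTranspose]
      calc star U * R * (R * U) = star U * (R * R) * U := by simp only [Matrix.mul_assoc]
        _ = star U * P * U := by rw [hRR]
    have : ∑ i, ((xᴴ * x) i i).re = ((xᴴ * x).trace).re := by
      rw [Matrix.trace, Complex.re_sum]; rfl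
    rw [this, hxx, Matrix.trace_mul_cycle, hUU', one_mul]
  have hyy : yᴴ * y = Wᴴ * Q * W := by
    rw [hydef, conjTranspose_mul, hRQ.1]
    calc Wᴴ * hQ.sqrt * (hQ.sqrt * W) = Wᴴ * (hQ.sqrt * hQ.sqrt) * W := by
          simp only [Matrix.mul_assoc]
      _ = Wᴴ * Q * W := by rw [hQ.sqrt_mul_self]
  have hβ2 : ∑ i, (β i)^2 ≤ Q.trace.re := by
    have h1 : ∀ i, (β i)^2 = ((yᴴ * y) i i).re := fun i => by
      rw [col_norm_sq, hβdef]
      exact Real.sq_sqrt (Finset.sum_nonneg fun k _ => sq_nonneg _)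
    rw [Finset.sum_congr rfl fun i _ => h1 i]
    have h2 : ∑ i, ((yᴴ * y) i i).re = ((yᴴ * y).trace).re := by
      rw [Matrix.trace, Complex.re_sum]; rfl
    rw [h2, hyy]
    have hE2' : (W * Wᴴ) * (W * Wᴴ) = W * Wᴴ := by
      calc W * Wᴴ * (W * Wᴴ) = W * (Wᴴ * W) * Wᴴ := by simp only [Matrix.mul_assoc]
        _ = W * diagonal χ * Wᴴ := by rw [hWW]
        _ = W * Wᴴ := by rw [hWχ]
    exact proj_trace_le hQ hE2'
  have hfinal : ∑ i, α i * β i ≤ Real.sqrt (P.trace.re * Q.trace.re) := by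
    have hnn : 0 ≤ ∑ i, α i * β i :=
      Finset.sum_nonneg fun i _ => mul_nonneg (hαnn i) (hβnn i)
    have hcs := Finset.sum_mul_sq_le_sq_mul_sq Finset.univ α β
    calc ∑ i, α i * β i = Real.sqrt ((∑ i, α i * β i)^2) := (Real.sqrt_sq hnn).symm
      _ ≤ Real.sqrt ((∑ i, (α i)^2) * (∑ i, (β i)^2)) := Real.sqrt_le_sqrt hcs
      _ ≤ Real.sqrt (P.trace.re * Q.trace.re) := by
          refine Real.sqrt_le_sqrt ?_
          rw [hα2]
          exact mul_le_mul_of_nonneg_left hβ2 (trace_re_nonneg' hP)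
  have main : (hD.sqrt.trace).re ≤ Real.sqrt (P.trace.re * Q.trace.re) :=
    calc (hD.sqrt.trace).re = ∑ i, ((xᴴ * y) i i).re := hsum
      _ ≤ ∑ i, α i * β i := Finset.sum_le_sum fun i _ => entry_le i
      _ ≤ Real.sqrt (P.trace.re * Q.trace.re) := hfinal
  exact main
end Helpers


abbrev Pare (N : ℕ) := {p : Fin N × Fin N // p.1 < p.2}

lemma sum_pairs {N : ℕ} (g : Fin N → Fin N → ℂ) (hsym : ∀ i j, g i j = g j i)
    (hdiag : ∀ i, g i i = 0) :
    2 * ∑ p : Pare N, g p.1.1 p.1.2 = ∑ i, ∑ j, g i j := by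
  classical
  have h1 : ∑ q ∈ Finset.univ.filter (fun q : Fin N × Fin N => q.1 < q.2), g q.1 q.2
      = ∑ p : Pare N, g p.1.1 p.1.2 :=
    Finset.sum_subtype _ (fun q => by simp) _
  have h3 : ∑ i, ∑ j, g i j = ∑ q : Fin N × Fin N, g q.1 q.2 := by
    rw [← Finset.sum_product']
    rfl
  have h4 := Finset.sum_filter_add_sum_filter_not Finset.univ
    (fun q : Fin N × Fin N => q.1 < q.2) (fun q => g q.1 q.2)
  have h5 := Finset.sum_filter_add_sum_filter_not
    (Finset.univ.filter (fun q : Fin N × Fin N => ¬ q.1 < q.2))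
    (fun q : Fin N × Fin N => q.2 < q.1) (fun q => g q.1 q.2)
  have h6 : ∑ q ∈ ((Finset.univ.filter (fun q : Fin N × Fin N => ¬ q.1 < q.2)).filter
      (fun q : Fin N × Fin N => ¬ q.2 < q.1)), g q.1 q.2 = 0 := by
    refine Finset.sum_eq_zero fun q hq => ?_
    simp only [Finset.mem_filter] at hq
    have : q.1 = q.2 := le_antisymm (not_lt.mp hq.2) (not_lt.mp hq.1.2)
    rw [this]
    exact hdiag _
  have h7 : ∑ q ∈ ((Finset.univ.filter (fun q : Fin N × Fin N => ¬ q.1 < q.2)).filter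
      (fun q : Fin N × Fin N => q.2 < q.1)), g q.1 q.2
      = ∑ q ∈ Finset.univ.filter (fun q : Fin N × Fin N => q.1 < q.2), g q.1 q.2 := by
    refine Finset.sum_nbij' (fun q => Prod.swap q) (fun q => Prod.swap q) ?_ ?_ ?_ ?_ ?_
    · intro a ha
      simp only [Finset.mem_filter, Finset.mem_univ, true_and] at ha ⊢
      exact ha.2
    · intro a ha
      simp only [Finset.mem_filter, Finset.mem_univ, true_and] at ha ⊢
      exact ⟨not_lt.mpr (le_of_lt ha), ha⟩
    · intro a _; exact Prod.swap_swap a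
    · intro a _; exact Prod.swap_swap a
    · intro a _; exact hsym a.1 a.2
  rw [← h1, h3, ← h4, ← h5, h6, add_zero, h7]
  ring

noncomputable def cmpd {N : ℕ} (A : Matrix (Fin N) (Fin N) ℂ) : Matrix (Pare N) (Pare N) ℂ :=
  fun p q => A p.1.1 q.1.1 * A p.1.2 q.1.2 - A p.1.1 q.1.2 * A p.1.2 q.1.1

lemma cmpd_mul {N : ℕ} (A B : Matrix (Fin N) (Fin N) ℂ) :
    cmpd (A * B) = cmpd A * cmpd B := by
  ext p q
  set i := p.1.1; set j := p.1.2; set a := q.1.1; set b := q.1.2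
  set g : Fin N → Fin N → ℂ := fun k l =>
    (A i k * A j l - A i l * A j k) * (B k a * B l b - B k b * B l a) with hg
  have hsym : ∀ k l, g k l = g l k := by intro k l; rw [hg]; ring
  have hdiag : ∀ k, g k k = 0 := by intro k; rw [hg]; ring
  have key := sum_pairs g hsym hdiag
  have hrhs : (cmpd A * cmpd B) p q = ∑ r : Pare N, g r.1.1 r.1.2 := by
    rw [Matrix.mul_apply]
    rfl
  have hexp : ∑ k, ∑ l, g k l = 2 * ((A * B) i a * (A * B) j b - (A * B) i b * (A * B) j a) := by
    have inner : ∀ k, ∑ l, g k l =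
        (A i k * B k a) * (A * B) j b - (A i k * B k b) * (A * B) j a
        - (A j k * B k a) * (A * B) i b + (A j k * B k b) * (A * B) i a := by
      intro k
      have hterm : ∀ l, g k l =
          (A i k * B k a) * (A j l * B l b) - (A i k * B k b) * (A j l * B l a)
          - (A j k * B k a) * (A i l * B l b) + (A j k * B k b) * (A i l * B l a) := by
        intro l; rw [hg]; ring
      rw [Finset.sum_congr rfl fun l _ => hterm l]
      simp only [Finset.sum_add_distrib, Finset.sum_sub_distrib, ← Finset.mul_sum]
      rw [← Matrix.mul_apply, ← Matrix.mul_apply, ← Matrix.mul_apply, ← Matrix.mul_apply]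
    rw [Finset.sum_congr rfl fun k _ => inner k]
    simp only [Finset.sum_add_distrib, Finset.sum_sub_distrib, ← Finset.sum_mul]
    rw [← Matrix.mul_apply, ← Matrix.mul_apply, ← Matrix.mul_apply, ← Matrix.mul_apply]
    ring
  have h2 : (2:ℂ) ≠ 0 := two_ne_zero
  apply mul_left_cancel₀ h2
  rw [hrhs, key, hexp]
  rfl

lemma cmpd_conjTranspose {N : ℕ} (A : Matrix (Fin N) (Fin N) ℂ) : cmpd Aᴴ = (cmpd A)ᴴ := by
  ext p q
  simp only [cmpd, conjTranspose_apply, star_sub, star_mul']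
  ring

lemma cmpd_psd {N : ℕ} {A : Matrix (Fin N) (Fin N) ℂ} (hA : A.PosSemidef) :
    (cmpd A).PosSemidef := by
  have h : A = hA.sqrtᴴ * hA.sqrt := by
    rw [hA.posSemidef_sqrt.1, hA.sqrt_mul_self]
  have : cmpd A = (cmpd hA.sqrt)ᴴ * cmpd hA.sqrt := by
    rw [← cmpd_conjTranspose, ← cmpd_mul, ← h]
  rw [this]
  exact Matrix.posSemidef_conjTranspose_mul_self _

lemma cmpd_sqrt {N : ℕ} {A : Matrix (Fin N) (Fin N) ℂ} (hA : A.PosSemidef)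
    (hc : (cmpd A).PosSemidef) : cmpd hA.sqrt = hc.sqrt :=
  (cmpd_psd hA.posSemidef_sqrt).eq_sqrt_of_sq_eq hc
    (by rw [pow_two, ← cmpd_mul, hA.sqrt_mul_self])

lemma trace_cmpd {N : ℕ} (A : Matrix (Fin N) (Fin N) ℂ) :
    2 * (cmpd A).trace = A.trace ^ 2 - (A * A).trace := by
  set g : Fin N → Fin N → ℂ := fun i j => A i i * A j j - A i j * A j i with hg
  have hsym : ∀ i j, g i j = g j i := by intro i j; rw [hg]; ring
  have hdiag : ∀ i, g i i = 0 := by intro i; rw [hg]; ring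
  have key := sum_pairs g hsym hdiag
  have h1 : (cmpd A).trace = ∑ p : Pare N, g p.1.1 p.1.2 := rfl
  rw [h1, key]
  have h2 : ∑ i, ∑ j, g i j = (∑ i, A i i) * (∑ j, A j j) - ∑ i, ∑ j, A i j * A j i := by
    rw [Finset.sum_mul_sum]
    simp only [hg, Finset.sum_sub_distrib]
  rw [h2]
  have h3 : (A * A).trace = ∑ i, ∑ j, A i j * A j i := by
    rw [Matrix.trace]
    exact Finset.sum_congr rfl fun i _ => Matrix.mul_apply
  rw [h3, show A.trace = ∑ i, A i i from rfl]
  ring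


lemma trace_real {n : Type*} [Fintype n] {A : Matrix n n ℂ} (hA : A.IsHermitian) :
    (A.trace : ℂ).im = 0 := by
  have h := Matrix.trace_conjTranspose A
  rw [hA.eq] at h
  have h1 : (starRingEnd ℂ) A.trace = A.trace := h.symm
  have h2 := congrArg Complex.im h1
  simp only [Complex.conj_im] at h2
  linarith

theorem fidelity_le_superFidelity {N : ℕ} (ρ₁ ρ₂ : Matrix (Fin N) (Fin N) ℂ)
    (h1 : ρ₁.PosSemidef) (h2 : ρ₂.PosSemidef)
    (t1 : ρ₁.trace = 1) (t2 : ρ₂.trace = 1) :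
    fid ρ₁ ρ₂ ≤ ((ρ₁ * ρ₂).trace).re +
      Real.sqrt ((1 - ((ρ₁ * ρ₁).trace).re) * (1 - ((ρ₂ * ρ₂).trace).re)) := by
  have hD : (h1.sqrt * ρ₂ * h1.sqrt).PosSemidef := by
    have := h2.mul_mul_conjTranspose_same h1.sqrt
    rwa [h1.posSemidef_sqrt.1] at this
  have hfid : fid ρ₁ ρ₂ = ((hD.sqrt.trace).re)^2 := by
    unfold fid
    rw [dif_pos h1, dif_pos hD]
  set S := hD.sqrt with hSdef
  have hS : S.PosSemidef := hD.posSemidef_sqrt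
  have hSS : S * S = h1.sqrt * ρ₂ * h1.sqrt := hD.sqrt_mul_self
  have hs_im : S.trace.im = 0 := trace_real hS.1
  -- the trace identity
  have hid := trace_cmpd S
  have hDtr : (S * S).trace = (ρ₁ * ρ₂).trace := by
    rw [hSS, Matrix.trace_mul_cycle h1.sqrt ρ₂ h1.sqrt, h1.sqrt_mul_self]
  rw [pow_two, hDtr] at hid
  have hre := congrArg Complex.re hid
  simp only [Complex.mul_re, Complex.sub_re, Complex.re_ofNat, Complex.im_ofNat, hs_im,
    mul_zero, zero_mul, sub_zero] at hre
  -- hre : 2 * (cmpd S).trace.re = S.trace.re * S.trace.re - (ρ₁ * ρ₂).trace.re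
  -- compound matrices of the states
  have hP : (cmpd ρ₁).PosSemidef := cmpd_psd h1
  have hQc : (cmpd ρ₂).PosSemidef := cmpd_psd h2
  have hcmpdD : cmpd (h1.sqrt * ρ₂ * h1.sqrt) = hP.sqrt * cmpd ρ₂ * hP.sqrt := by
    rw [← cmpd_sqrt h1 hP, ← cmpd_mul, ← cmpd_mul]
  have hDc : (hP.sqrt * cmpd ρ₂ * hP.sqrt).PosSemidef := hcmpdD ▸ cmpd_psd hD
  have hSc : cmpd S = hDc.sqrt :=
    (cmpd_psd hS).eq_sqrt_of_sq_eq hDc (by rw [pow_two, ← cmpd_mul, hSS, hcmpdD])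
  have hbound : ((cmpd S).trace).re ≤
      Real.sqrt (((cmpd ρ₁).trace).re * ((cmpd ρ₂).trace).re) := by
    rw [hSc]
    exact trace_sqrt_le hP hQc hDc
  -- identify the compound traces
  have ha := trace_cmpd ρ₁
  rw [t1, one_pow] at ha
  have ha' := congrArg Complex.re ha
  simp only [Complex.mul_re, Complex.sub_re, Complex.re_ofNat, Complex.im_ofNat, Complex.one_re,
    mul_zero, zero_mul, sub_zero] at ha'
  have hb := trace_cmpd ρ₂
  rw [t2, one_pow] at hb
  have hb' := congrArg Complex.re hb
  simp only [Complex.mul_re, Complex.sub_re, Complex.re_ofNat, Complex.im_ofNat, Complex.one_re,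
    mul_zero, zero_mul, sub_zero] at hb'
  set a := ((cmpd ρ₁).trace).re with hadef
  set b := ((cmpd ρ₂).trace).re with hbdef
  have hann : 0 ≤ a := trace_re_nonneg' hP
  have hbnn : 0 ≤ b := trace_re_nonneg' hQc
  -- rhs sqrt computation
  have hsqrt : Real.sqrt ((1 - ((ρ₁ * ρ₁).trace).re) * (1 - ((ρ₂ * ρ₂).trace).re))
      = 2 * Real.sqrt (a * b) := by
    have e1 : (1 - ((ρ₁ * ρ₁).trace).re) = 2 * a := by linarith
    have e2 : (1 - ((ρ₂ * ρ₂).trace).re) = 2 * b := by linarith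
    rw [e1, e2, show (2*a) * (2*b) = 4 * (a*b) by ring,
      Real.sqrt_mul (by norm_num : (0:ℝ) ≤ 4) (a*b),
      show Real.sqrt 4 = 2 by
        rw [show (4:ℝ) = 2^2 by norm_num, Real.sqrt_sq (by norm_num : (0:ℝ) ≤ 2)]]
  rw [hfid, hsqrt, pow_two]
  nlinarith [hbound, hre]
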